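/- With the notation of Lemma 3.1 (colored partition counts d_k and the counts e_k of such partitions with largest part exactly k), for all u, v ∈ ℕ and k, n ≥ 1: e_{(2k+1)_{ab}}(u,v,n) = d_{(2k−1)_a}(u−1, v−1, n−2k−1), i.e., removing the largest part (2k+1)_{ab} from a colored partition with largest part exactly (2k+1)_{ab} gives a bijection onto colored partitions with largest part at most (2k−1)_a, u decreased by 1, v decreased by 1, and weight decreased by 2k+1. -/

import Mathlib

/-- The five colours a, b, ab, a², b². -/
inductive Col where
  | a | b | ab | aa | bb
deriving DecidableEq, Inhabited

open Col

/-- Position of a coloured integer in the ordering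
1_{ab} < 1_a < 1_{b²} < 1_b < 2_{ab} < 2_a < 3_{a²} < 2_b < 3_{ab} < ⋯ . -/
def colPos : ℕ × Col → ℕ
  | (k, Col.ab) => 4 * k - 4
  | (k, Col.a)  => 4 * k - 3
  | (k, Col.bb) => 4 * k - 2
  | (k, Col.b)  => 4 * k - 1
  | (k, Col.aa) => 4 * k - 6

/-- Entry of the matrix A: minimal gap below a part of size `k` and colour `x`,
above a part of colour `y`. -/
def colMinGap (k : ℕ) (x y : Col) : ℕ :=
  match x, y with
  | Col.a, y => if k % 2 = 1 then
      (match y with | Col.ab => 1 | _ => 2)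
    else
      (match y with | Col.aa => 3 | Col.bb => 3 | _ => 2)
  | Col.bb, y => (match y with | Col.b => 3 | Col.bb => 4 | _ => 2)
  | Col.b, y => if k % 2 = 1 then
      (match y with | Col.a => 1 | Col.ab => 1 | _ => 2)
    else
      (match y with | Col.a => 1 | Col.ab => 1 | Col.aa => 1 | Col.bb => 3 | _ => 2)
  | Col.ab, y => if k % 2 = 0 then
      (match y with | Col.aa => 3 | Col.bb => 3 | _ => 2)
    else
      (match y with | Col.b => 3 | Col.bb => 3 | _ => 2)
  | Col.aa, y => (match y with | Col.aa => 4 | Col.bb => 4 | _ => 3)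

/-- A coloured partition as in the non-dilated Siladić theorem: parts are coloured
positive integers, squared colours only occur on odd integers, there is no part
1_{ab} or 1_{b²}, and consecutive parts satisfy the gap conditions of matrix A. -/
def IsColPartition (l : List (ℕ × Col)) : Prop :=
  (∀ p ∈ l, 1 ≤ p.1 ∧ ((p.2 = Col.aa ∨ p.2 = Col.bb) → p.1 % 2 = 1) ∧
    p ≠ (1, Col.ab) ∧ p ≠ (1, Col.bb)) ∧
  ∀ i, i + 1 < l.length →
    l[i]!.1 ≥ l[i+1]!.1 + colMinGap l[i]!.1 l[i]!.2 l[i+1]!.2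

/-- Number of parts coloured a or ab, plus twice the number of parts coloured a². -/
def aCt (l : List (ℕ × Col)) : ℕ :=
  (l.countP fun p => p.2 == Col.a || p.2 == Col.ab) +
    2 * (l.countP fun p => p.2 == Col.aa)

/-- Number of parts coloured b or ab, plus twice the number of parts coloured b². -/
def bCt (l : List (ℕ × Col)) : ℕ :=
  (l.countP fun p => p.2 == Col.b || p.2 == Col.ab) +
    2 * (l.countP fun p => p.2 == Col.bb)

/-- D(u,v,n): coloured partitions of n with a-count u and b-count v. -/
noncomputable def Dct (u v n : ℕ) : ℕ :=
  Nat.card {l : List (ℕ × Col) // IsColPartition l ∧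
    (l.map Prod.fst).sum = n ∧ aCt l = u ∧ bCt l = v}

/-- d_K(u,v,n): as D(u,v,n) but with largest part at most K in the coloured order;
integer arguments (negative values give 0). -/
noncomputable def dct (K : ℕ × Col) (u v n : ℤ) : ℕ :=
  Nat.card {l : List (ℕ × Col) // IsColPartition l ∧
    (∀ p ∈ l, colPos p ≤ colPos K) ∧
    ((l.map Prod.fst).sum : ℤ) = n ∧ (aCt l : ℤ) = u ∧ (bCt l : ℤ) = v}

/-- e_K(u,v,n): as d_K(u,v,n) but with largest part exactly K. -/
noncomputable def ect (K : ℕ × Col) (u v n : ℤ) : ℕ :=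
  Nat.card {l : List (ℕ × Col) // IsColPartition l ∧
    (∀ p ∈ l, colPos p ≤ colPos K) ∧ l ≠ [] ∧ l.head! = K ∧
    ((l.map Prod.fst).sum : ℤ) = n ∧ (aCt l : ℤ) = u ∧ (bCt l : ℤ) = v}

/-- The generating function G_K(a,b,q) = 1 + ∑_{u,v≥0,n≥1} d_K(u,v,n) aᵘbᵛqⁿ,
as a formal power series in the variables a = X 0, b = X 1, q = X 2. -/
noncomputable def Gf (K : ℕ × Col) : MvPowerSeries (Fin 3) ℚ :=
  fun e => (dct K (e 0) (e 1) (e 2) : ℚ)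



section AuxRemoveEab
open Col

lemma gap_ab_odd (j : ℕ) (h : j % 2 = 1) (y : Col) :
    colMinGap j Col.ab y = (match y with | Col.b => 3 | Col.bb => 3 | _ => 2) := by
  rw [colMinGap.eq_def]
  dsimp only
  rw [if_neg (by omega)]

lemma gap_pos' (k : ℕ) (x y : Col) : 1 ≤ colMinGap k x y := by
  rw [colMinGap.eq_def]
  rcases Nat.mod_two_eq_zero_or_one k with h | h <;>
    cases x <;> cases y <;> simp [h]

lemma isCol_tail {p : ℕ × Col} {m : List (ℕ × Col)} (h : IsColPartition (p :: m)) :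
    IsColPartition m := by
  refine ⟨fun q hq => h.1 q (List.mem_cons_of_mem _ hq), fun i hi => ?_⟩
  have := h.2 (i+1) (by simpa using Nat.succ_lt_succ hi)
  simpa using this

lemma isCol_cons {p : ℕ × Col} {m : List (ℕ × Col)} (hm : IsColPartition m)
    (hp : 1 ≤ p.1 ∧ ((p.2 = Col.aa ∨ p.2 = Col.bb) → p.1 % 2 = 1) ∧
      p ≠ (1, Col.ab) ∧ p ≠ (1, Col.bb))
    (hgap : 0 < m.length → p.1 ≥ m[0]!.1 + colMinGap p.1 p.2 m[0]!.2) :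
    IsColPartition (p :: m) := by
  constructor
  · intro q hq
    rcases List.mem_cons.1 hq with h | h
    · exact h ▸ hp
    · exact hm.1 q h
  · intro i hi
    cases i with
    | zero =>
      have hml : 0 < m.length := by simpa using hi
      simpa using hgap hml
    | succ i =>
      have := hm.2 i (by simpa using Nat.lt_of_succ_lt_succ hi)
      simpa using this

lemma chain_le {l : List (ℕ × Col)} (h : IsColPartition l) :
    ∀ d i, i + d < l.length → l[i+d]!.1 + d ≤ l[i]!.1 := by
  intro d
  induction d with
  | zero => simp
  | succ d ih =>
    intro i hi
    have h1 := h.2 (i+d) (by omega)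
    have h2 := ih i (by omega)
    have h3 := gap_pos' l[i+d]!.1 l[i+d]!.2 l[i+d+1]!.2
    have h4 : i + (d+1) = i + d + 1 := by omega
    rw [h4]
    omega

lemma key_gap {k : ℕ} (hk : 1 ≤ k) {m : List (ℕ × Col)}
    (hb : ∀ q ∈ m, colPos q ≤ colPos (2*k-1, Col.a)) (h : 0 < m.length) :
    2*k+1 ≥ m[0]!.1 + colMinGap (2*k+1) Col.ab m[0]!.2 := by
  have hmod : (2*k+1) % 2 = 1 := by omega
  rcases hq : m[0]! with ⟨qn, qc⟩
  have hmem : (qn, qc) ∈ m := by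
    rw [← hq, getElem!_pos m 0 h]; exact List.getElem_mem h
  have hb0 := hb _ hmem
  simp only [hq, gap_ab_odd _ hmod]
  cases qc <;> simp only [colPos] at hb0 <;> simp <;> omega

lemma key_bound {k : ℕ} (hk : 1 ≤ k) {m : List (ℕ × Col)} (hm : IsColPartition m)
    (hgap : 0 < m.length → 2*k+1 ≥ m[0]!.1 + colMinGap (2*k+1) Col.ab m[0]!.2) :
    ∀ q ∈ m, colPos q ≤ colPos (2*k-1, Col.a) := by
  intro q hq
  obtain ⟨i, hi, hiq⟩ := List.mem_iff_getElem.1 hq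
  have hq! : m[i]! = q := by rw [getElem!_pos m i hi, hiq]
  have h0 : 0 < m.length := lt_of_le_of_lt (Nat.zero_le i) hi
  have hg := hgap h0
  have hmod : (2*k+1) % 2 = 1 := by omega
  rw [gap_ab_odd _ hmod] at hg
  cases i with
  | zero =>
    rw [hq!] at hg
    obtain ⟨qn, qc⟩ := q
    cases qc <;> simp only [colPos] <;> simp at hg <;> omega
  | succ i =>
    have hc := chain_le hm (i+1) 0 (by simpa using hi)
    simp only [Nat.zero_add] at hc
    rw [hq!] at hc
    have hhd : m[0]!.1 ≤ 2*k-1 := by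
      cases h2 : m[0]!.2 <;> rw [h2] at hg <;> simp at hg ⊢ <;> omega
    have hq2 : q.1 ≤ 2*k-2 := by omega
    obtain ⟨qn, qc⟩ := q
    cases qc <;> simp only [colPos] at hq2 ⊢ <;> omega

lemma aCt_cons_ab (j : ℕ) (m : List (ℕ × Col)) :
    aCt ((j, Col.ab) :: m) = aCt m + 1 := by
  simp [aCt, List.countP_cons]; omega

lemma bCt_cons_ab (j : ℕ) (m : List (ℕ × Col)) :
    bCt ((j, Col.ab) :: m) = bCt m + 1 := by
  simp [bCt, List.countP_cons]; omega

end AuxRemoveEab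

/-- Removing the largest part (2k+1)_{ab}:
e_{(2k+1)_{ab}}(u,v,n) = d_{(2k-1)_a}(u-1,v-1,n-2k-1). -/
theorem remove_largest_eab (u v k n : ℕ) (hk : 1 ≤ k) (hn : 1 ≤ n) :
    ect (2*k+1, Col.ab) u v n =
      dct (2*k-1, Col.a) ((u : ℤ) - 1) ((v : ℤ) - 1) ((n : ℤ) - (2*k+1)) := by
  apply Nat.card_congr
  refine { toFun := fun x => ⟨x.1.tail, ?_⟩,
           invFun := fun y => ⟨(2*k+1, Col.ab) :: y.1, ?_⟩,
           left_inv := ?_, right_inv := ?_ }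
  · obtain ⟨l, hpart, hbound, hne, hhead, hsum, ha, hb⟩ := x
    have hcons : l = (2*k+1, Col.ab) :: l.tail := by
      conv_lhs => rw [← List.cons_head!_tail hne]
      rw [hhead]
    have hpart' : IsColPartition ((2*k+1, Col.ab) :: l.tail) := hcons ▸ hpart
    have hpm : IsColPartition l.tail := isCol_tail hpart'
    have hgap : 0 < l.tail.length →
        2*k+1 ≥ l.tail[0]!.1 + colMinGap (2*k+1) Col.ab l.tail[0]!.2 := by
      intro h0
      have h2 := hpart'.2 0 (by simpa using h0)
      simpa using h2
    rw [hcons] at hsum ha hb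
    rw [aCt_cons_ab] at ha
    rw [bCt_cons_ab] at hb
    simp only [List.map_cons, List.sum_cons] at hsum
    refine ⟨hpm, key_bound hk hpm hgap, ?_, ?_, ?_⟩
    · push_cast at hsum ⊢; omega
    · push_cast at ha ⊢; omega
    · push_cast at hb ⊢; omega
  · obtain ⟨m, hpm, hbound, hsum, ha, hb⟩ := y
    have hgap := fun h => key_gap hk hbound h
    refine ⟨isCol_cons hpm ?_ hgap, ?_, List.cons_ne_nil _ _, rfl, ?_, ?_, ?_⟩
    · refine ⟨by omega, by simp, ?_, by simp⟩
      simp only [ne_eq, Prod.mk.injEq]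
      intro h
      omega
    · intro q hq
      rcases List.mem_cons.1 hq with h | h
      · subst h; exact le_refl _
      · refine le_trans (hbound q h) ?_
        simp only [colPos]
        omega
    · simp only [List.map_cons, List.sum_cons]
      push_cast at hsum ⊢; omega
    · rw [aCt_cons_ab]; push_cast at ha ⊢; omega
    · rw [bCt_cons_ab]; push_cast at hb ⊢; omega
  · intro x
    apply Subtype.ext
    obtain ⟨l, hpart, hbound, hne, hhead, rest⟩ := x
    show (2*k+1, Col.ab) :: l.tail = l
    conv_rhs => rw [← List.cons_head!_tail hne]
    rw [hhead]
  · intro y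
    apply Subtype.ext
    rfl
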